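/- Fix v_k ∈ ℝ^d, z ∈ ℝ and 0 ≤ s ≤ T_k, and set A_I := φ_{T−T_k}(v_k) − φ_{T−T_k}(u_k) and B_I := ψ_{T−T_k}(v_k) − ψ_{T−T_k}(u_k). Assume X has the affine property at z ψ_{T−T_k}(v_k) + (1−z) ψ_{T−T_k}(u_k) and that (φ, ψ) satisfy the semiflow equations at u_k. Then, Q'-almost surely, E_{Q'}[exp(z(A_I + B_I·X_{T_k})) | ℱ_s] = exp( z φ_{T−T_k}(v_k) + (1−z) φ_{T−T_k}(u_k) + φ_{T_k−s}(z ψ_{T−T_k}(v_k) + (1−z) ψ_{T−T_k}(u_k)) + ψ_{T_k−s}(z ψ_{T−T_k}(v_k) + (1−z) ψ_{T−T_k}(u_k))·X_s ) / exp( φ_{T−s}(u_k) + ψ_{T−s}(u_k)·X_s ). -/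

import Mathlib

open MeasureTheory Real Matrix
open scoped ENNReal NNReal

/-- `X` has the affine property at `u` with exponent functions `φ, ψ`, with respect to the
filtration `ℱ`, the measure `Q` and the horizon `T`. -/
def AffineProperty {Ω : Type*} {m0 : MeasurableSpace Ω} {d : ℕ} (T : ℝ)
    (ℱ : MeasureTheory.Filtration ℝ m0) (Q : Measure Ω) (X : ℝ → Ω → (Fin d → ℝ))
    (φ : ℝ → (Fin d → ℝ) → ℝ) (ψ : ℝ → (Fin d → ℝ) → (Fin d → ℝ))
    (u : Fin d → ℝ) : Prop :=
  ∀ s t : ℝ, 0 ≤ s → s ≤ t → t ≤ T →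
    Integrable (fun ω => exp (u ⬝ᵥ X t ω)) Q ∧
    Q[fun ω => exp (u ⬝ᵥ X t ω)|ℱ s] =ᵐ[Q]
      fun ω => exp (φ (t - s) u + ψ (t - s) u ⬝ᵥ X s ω)

/-- `(φ, ψ)` satisfy the semiflow equations at the vector `v`, up to horizon `T`. -/
def Semiflow {d : ℕ} (T : ℝ) (φ : ℝ → (Fin d → ℝ) → ℝ)
    (ψ : ℝ → (Fin d → ℝ) → (Fin d → ℝ)) (v : Fin d → ℝ) : Prop :=
  (∀ s t : ℝ, 0 ≤ s → 0 ≤ t → t + s ≤ T →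
      φ (t + s) v = φ t v + φ s (ψ t v) ∧ ψ (t + s) v = ψ s (ψ t v)) ∧
    φ 0 v = 0 ∧ ψ 0 v = v

/-- The forward measure `Q'` defined by the density
`dQ'/dQ = exp (φ (T - Tk) uk + ψ (T - Tk) uk ⬝ᵥ X Tk) / exp (φ T uk + ψ T uk ⬝ᵥ x)`. -/
noncomputable def forwardMeasure {Ω : Type*} {m0 : MeasurableSpace Ω} {d : ℕ} (T : ℝ)
    (Q : Measure Ω) (X : ℝ → Ω → (Fin d → ℝ)) (x : Fin d → ℝ)
    (φ : ℝ → (Fin d → ℝ) → ℝ) (ψ : ℝ → (Fin d → ℝ) → (Fin d → ℝ))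
    (Tk : ℝ) (uk : Fin d → ℝ) : Measure Ω :=
  Q.withDensity (fun ω => ENNReal.ofReal
    (exp (φ (T - Tk) uk + ψ (T - Tk) uk ⬝ᵥ X Tk ω) / exp (φ T uk + ψ T uk ⬝ᵥ x)))


section AuxLemmas

open scoped ENNReal

variable {Ω : Type*}

lemma measurable_dotProduct_comp {m : MeasurableSpace Ω} {d : ℕ} {X : Ω → Fin d → ℝ}
    (hX : Measurable X) (b : Fin d → ℝ) : Measurable fun ω => b ⬝ᵥ X ω := by
  simp only [dotProduct]
  exact Finset.measurable_sum _ fun i _ =>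
    measurable_const.mul ((measurable_pi_apply i).comp hX)

lemma lintegral_mul_ofReal_condexp {m m0 : MeasurableSpace Ω} (hm : m ≤ m0)
    {μ : Measure Ω} [SigmaFinite (μ.trim hm)] {F : Ω → ℝ} (hF : Integrable F μ)
    (hF0 : 0 ≤ᵐ[μ] F) {h : Ω → ℝ≥0∞} (hh : Measurable[m] h) :
    ∫⁻ ω, h ω * ENNReal.ofReal (F ω) ∂μ
      = ∫⁻ ω, h ω * ENNReal.ofReal ((μ[F|m]) ω) ∂μ := by
  have hFm : AEMeasurable (fun ω => ENNReal.ofReal (F ω)) μ :=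
    ENNReal.measurable_ofReal.comp_aemeasurable hF.aemeasurable
  have hCm : AEMeasurable (fun ω => ENNReal.ofReal ((μ[F|m]) ω)) μ :=
    ENNReal.measurable_ofReal.comp_aemeasurable integrable_condExp.aemeasurable
  have hhm0 : Measurable h := hh.mono hm le_rfl
  have htrim : (μ.withDensity fun ω => ENNReal.ofReal (F ω)).trim hm
      = (μ.withDensity fun ω => ENNReal.ofReal ((μ[F|m]) ω)).trim hm := by
    refine @Measure.ext Ω m _ _ fun A hA => ?_
    rw [trim_measurableSet_eq hm hA, trim_measurableSet_eq hm hA,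
      withDensity_apply _ (hm A hA), withDensity_apply _ (hm A hA),
      ← ofReal_integral_eq_lintegral_ofReal hF.integrableOn (ae_restrict_of_ae hF0),
      ← ofReal_integral_eq_lintegral_ofReal integrable_condExp.integrableOn
        (ae_restrict_of_ae (condExp_nonneg hF0)),
      setIntegral_condExp hm hF hA]
  calc ∫⁻ ω, h ω * ENNReal.ofReal (F ω) ∂μ
      = ∫⁻ ω, h ω ∂(μ.withDensity fun ω => ENNReal.ofReal (F ω)) := by
        rw [lintegral_withDensity_eq_lintegral_mul₀ hFm hhm0.aemeasurable]
        exact lintegral_congr fun ω => mul_comm _ _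
    _ = ∫⁻ ω, h ω ∂((μ.withDensity fun ω => ENNReal.ofReal (F ω)).trim hm) :=
        (lintegral_trim hm hh).symm
    _ = ∫⁻ ω, h ω ∂((μ.withDensity fun ω => ENNReal.ofReal ((μ[F|m]) ω)).trim hm) := by
        rw [htrim]
    _ = ∫⁻ ω, h ω ∂(μ.withDensity fun ω => ENNReal.ofReal ((μ[F|m]) ω)) :=
        lintegral_trim hm hh
    _ = ∫⁻ ω, h ω * ENNReal.ofReal ((μ[F|m]) ω) ∂μ := by
        rw [lintegral_withDensity_eq_lintegral_mul₀ hCm hhm0.aemeasurable]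
        exact lintegral_congr fun ω => mul_comm _ _

lemma integrable_and_setIntegral_mul_condexp {m m0 : MeasurableSpace Ω} (hm : m ≤ m0)
    {μ : Measure Ω} [SigmaFinite (μ.trim hm)] {F G h' : Ω → ℝ} (hF : Integrable F μ)
    (hF0 : 0 ≤ᵐ[μ] F) (hh : Measurable[m] h') (hh0 : ∀ ω, 0 ≤ h' ω)
    (hG : μ[F|m] =ᵐ[μ] G) (hGint : Integrable (fun ω => h' ω * G ω) μ) :
    Integrable (fun ω => h' ω * F ω) μ ∧
      ∀ A : Set Ω, MeasurableSet[m] A →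
        ∫ ω in A, h' ω * F ω ∂μ = ∫ ω in A, h' ω * G ω ∂μ := by
  have hh0' : Measurable h' := hh.mono hm le_rfl
  have hhE : Measurable[m] fun ω => ENNReal.ofReal (h' ω) := ENNReal.measurable_ofReal.comp hh
  have hG0 : 0 ≤ᵐ[μ] G := by
    filter_upwards [hG, condExp_nonneg (E := ℝ) hF0] with ω h1 h2
    rw [← h1]; exact h2
  have hprodF0 : 0 ≤ᵐ[μ] fun ω => h' ω * F ω := by
    filter_upwards [hF0] with ω hω; exact mul_nonneg (hh0 ω) hω
  have hprodG0 : 0 ≤ᵐ[μ] fun ω => h' ω * G ω := by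
    filter_upwards [hG0] with ω hω; exact mul_nonneg (hh0 ω) hω
  have key : ∀ {A : Set Ω}, MeasurableSet[m] A →
      ∫⁻ ω in A, ENNReal.ofReal (h' ω * F ω) ∂μ
        = ∫⁻ ω in A, ENNReal.ofReal (h' ω * G ω) ∂μ := by
    intro A hA
    have hind : Measurable[m] fun ω =>
        A.indicator (fun _ => (1 : ℝ≥0∞)) ω * ENNReal.ofReal (h' ω) :=
      (measurable_const.indicator hA).mul hhE
    have h1 := lintegral_mul_ofReal_condexp hm hF hF0 hind
    have e : ∀ Y : Ω → ℝ,
        (fun ω => (A.indicator (fun _ => (1 : ℝ≥0∞)) ω * ENNReal.ofReal (h' ω))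
          * ENNReal.ofReal (Y ω))
          = A.indicator fun ω => ENNReal.ofReal (h' ω * Y ω) := by
      intro Y; funext ω
      by_cases hωA : ω ∈ A <;>
        simp [hωA, ENNReal.ofReal_mul (hh0 ω)]
    rw [e F, e fun ω => (μ[F|m]) ω] at h1
    simp only [lintegral_indicator (hm A hA)] at h1
    rw [h1]
    refine lintegral_congr_ae ?_
    filter_upwards [ae_restrict_of_ae hG] with ω hω
    rw [hω]
  have hnorm : (fun ω => (‖h' ω * F ω‖₊ : ℝ≥0∞)) =ᵐ[μ] fun ω => ENNReal.ofReal (h' ω * F ω) := by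
    filter_upwards [hprodF0] with ω hω
    rw [← enorm_eq_nnnorm, ← ofReal_norm, Real.norm_of_nonneg hω]
  have hfin : HasFiniteIntegral (fun ω => h' ω * F ω) μ := by
    have h2 : ∫⁻ ω, ENNReal.ofReal (h' ω * F ω) ∂μ = ∫⁻ ω, ENNReal.ofReal (h' ω * G ω) ∂μ := by
      simpa [Measure.restrict_univ] using key (MeasurableSet.univ (α := Ω))
    have h3 : ∫⁻ ω, ENNReal.ofReal (h' ω * G ω) ∂μ < ⊤ := by
      refine lt_of_le_of_lt (lintegral_mono fun ω => ?_) hGint.hasFiniteIntegral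
      rw [← ofReal_norm, Real.norm_eq_abs]
      exact ENNReal.ofReal_le_ofReal (le_abs_self _)
    show ∫⁻ ω, (‖h' ω * F ω‖₊ : ℝ≥0∞) ∂μ < ⊤
    rw [lintegral_congr_ae hnorm, h2]
    exact h3
  have hint : Integrable (fun ω => h' ω * F ω) μ :=
    ⟨hh0'.aestronglyMeasurable.mul hF.aestronglyMeasurable, hfin⟩
  refine ⟨hint, fun A hA => ?_⟩
  have h4 := key hA
  rw [← ofReal_integral_eq_lintegral_ofReal hint.integrableOn (ae_restrict_of_ae hprodF0),
    ← ofReal_integral_eq_lintegral_ofReal hGint.integrableOn (ae_restrict_of_ae hprodG0)] at h4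
  exact (ENNReal.ofReal_eq_ofReal_iff
    (integral_nonneg_of_ae (ae_restrict_of_ae hprodF0))
    (integral_nonneg_of_ae (ae_restrict_of_ae hprodG0))).mp h4

end AuxLemmas

/-- The conditional moment generating function of the log forward CPI under the forward
measure `Q'`: with `A_I := φ (T-Tk) vk - φ (T-Tk) uk` and `B_I := ψ (T-Tk) vk - ψ (T-Tk) uk`,
if `X` has the affine property at `z • ψ (T-Tk) vk + (1-z) • ψ (T-Tk) uk` and `(φ, ψ)` satisfy
the semiflow equations at `uk`, then `Q'`-a.s.
`E_{Q'}[exp (z * (A_I + B_I ⬝ᵥ X Tk)) | ℱ s]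
  = exp (z * φ (T-Tk) vk + (1-z) * φ (T-Tk) uk
      + φ (Tk-s) (z • ψ (T-Tk) vk + (1-z) • ψ (T-Tk) uk)
      + ψ (Tk-s) (z • ψ (T-Tk) vk + (1-z) • ψ (T-Tk) uk) ⬝ᵥ X s)
    / exp (φ (T-s) uk + ψ (T-s) uk ⬝ᵥ X s)`. -/
theorem forward_cpi_mgf
    {Ω : Type*} {m0 : MeasurableSpace Ω} {d : ℕ} (T : ℝ) (hT : 0 < T)
    (ℱ : MeasureTheory.Filtration ℝ m0) (Q : Measure Ω) [IsProbabilityMeasure Q]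
    (X : ℝ → Ω → (Fin d → ℝ)) (x : Fin d → ℝ)
    (hadapted : ∀ t : ℝ, 0 ≤ t → t ≤ T → Measurable[ℱ t] (X t))
    (hX0 : ∀ ω, X 0 ω = x)
    (φ : ℝ → (Fin d → ℝ) → ℝ) (ψ : ℝ → (Fin d → ℝ) → (Fin d → ℝ))
    (Tk : ℝ) (hTk0 : 0 ≤ Tk) (hTkT : Tk ≤ T) (uk : Fin d → ℝ)
    (haffine_uk : AffineProperty T ℱ Q X φ ψ uk)
    (haffine_psi : AffineProperty T ℱ Q X φ ψ (ψ (T - Tk) uk))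
    (vk : Fin d → ℝ) (z : ℝ) (s : ℝ) (hs : 0 ≤ s) (hsTk : s ≤ Tk)
    (AI : ℝ) (BI : Fin d → ℝ)
    (hAI : AI = φ (T - Tk) vk - φ (T - Tk) uk)
    (hBI : BI = ψ (T - Tk) vk - ψ (T - Tk) uk)
    (haffine_z : AffineProperty T ℱ Q X φ ψ (z • ψ (T - Tk) vk + (1 - z) • ψ (T - Tk) uk))
    (hsemiflow : Semiflow T φ ψ uk) :
    (forwardMeasure T Q X x φ ψ Tk uk)[fun ω => exp (z * (AI + BI ⬝ᵥ X Tk ω))|ℱ s]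
      =ᵐ[forwardMeasure T Q X x φ ψ Tk uk]
    fun ω => exp (z * φ (T - Tk) vk + (1 - z) * φ (T - Tk) uk
        + φ (Tk - s) (z • ψ (T - Tk) vk + (1 - z) • ψ (T - Tk) uk)
        + ψ (Tk - s) (z • ψ (T - Tk) vk + (1 - z) • ψ (T - Tk) uk) ⬝ᵥ X s ω)
      / exp (φ (T - s) uk + ψ (T - s) uk ⬝ᵥ X s ω) := by
  obtain ⟨hsf, -, -⟩ := hsemiflow
  have hsT : s ≤ T := hsTk.trans hTkT
  obtain ⟨hφeq, hψeq⟩ := hsf (Tk - s) (T - Tk) (by linarith) (by linarith) (by linarith)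
  have hTs : T - Tk + (Tk - s) = T - s := by ring
  rw [hTs] at hφeq hψeq
  set w : Fin d → ℝ := z • ψ (T - Tk) vk + (1 - z) • ψ (T - Tk) uk with hw
  obtain ⟨hint_w, hce_w⟩ := haffine_z s Tk hs hsTk hTkT
  obtain ⟨hint_α, hce_α⟩ := haffine_psi s Tk hs hsTk hTkT
  set c : ℝ := exp (φ T uk + ψ T uk ⬝ᵥ x) with hc
  have hcpos : 0 < c := exp_pos _
  set D : Ω → ℝ := fun ω => exp (φ (T - Tk) uk + ψ (T - Tk) uk ⬝ᵥ X Tk ω) / c with hD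
  have hQ' : forwardMeasure T Q X x φ ψ Tk uk
      = Q.withDensity fun ω => ENNReal.ofReal (D ω) := rfl
  have hD0 : ∀ ω, 0 ≤ D ω := fun ω => div_nonneg (exp_pos _).le hcpos.le
  have hXTk : Measurable (X Tk) := (hadapted Tk hTk0 hTkT).mono (ℱ.le Tk) le_rfl
  have hXsm : Measurable[ℱ s] (X s) := hadapted s hs hsT
  have hXs : Measurable (X s) := hXsm.mono (ℱ.le s) le_rfl
  have hDmeas : Measurable D :=
    (Real.measurable_exp.comp (measurable_const.add (measurable_dotProduct_comp hXTk _))).div_const c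
  have hDint : Integrable D Q := by
    refine (hint_α.const_mul (exp (φ (T - Tk) uk) / c)).congr
      (Filter.Eventually.of_forall fun ω => ?_)
    show exp (φ (T - Tk) uk) / c * exp (ψ (T - Tk) uk ⬝ᵥ X Tk ω) = D ω
    rw [hD]
    simp only [exp_add]
    ring
  haveI hfinQ' : IsFiniteMeasure (forwardMeasure T Q X x φ ψ Tk uk) := by
    rw [hQ']
    exact isFiniteMeasure_withDensity_ofReal hDint.hasFiniteIntegral
  set K₀ : ℝ := z * φ (T - Tk) vk + (1 - z) * φ (T - Tk) uk with hK₀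
  set C₁ : ℝ := exp K₀ / c with hC₁
  set Fw : Ω → ℝ := fun ω => exp (w ⬝ᵥ X Tk ω) with hFw
  set Gw : Ω → ℝ := fun ω => exp (φ (Tk - s) w + ψ (Tk - s) w ⬝ᵥ X s ω) with hGw
  set Fα : Ω → ℝ := fun ω => exp (ψ (T - Tk) uk ⬝ᵥ X Tk ω) with hFα
  set Gα : Ω → ℝ := fun ω => exp (φ (Tk - s) (ψ (T - Tk) uk)
      + ψ (Tk - s) (ψ (T - Tk) uk) ⬝ᵥ X s ω) with hGα
  set b : Fin d → ℝ := ψ (Tk - s) w - ψ (Tk - s) (ψ (T - Tk) uk) with hb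
  set a0 : ℝ := K₀ + φ (Tk - s) w - φ (T - s) uk + φ (T - Tk) uk with ha0
  set h' : Ω → ℝ := fun ω => exp (a0 + b ⬝ᵥ X s ω) / c with hh'
  set g : Ω → ℝ := fun ω =>
      exp (K₀ + φ (Tk - s) w + ψ (Tk - s) w ⬝ᵥ X s ω)
        / exp (φ (T - s) uk + ψ (T - s) uk ⬝ᵥ X s ω) with hg
  set f : Ω → ℝ := fun ω => exp (z * (AI + BI ⬝ᵥ X Tk ω)) with hf
  -- pointwise identities
  have hfD : ∀ ω, f ω * D ω = C₁ * Fw ω := by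
    intro ω
    simp only [hf, hD, hC₁, hFw, hc]
    rw [div_mul_eq_mul_div, ← mul_div_assoc, div_eq_div_iff (exp_pos _).ne' (exp_pos _).ne']
    simp only [← Real.exp_add]
    rw [Real.exp_eq_exp]
    simp only [hK₀, hw, hAI, hBI, add_dotProduct, sub_dotProduct, smul_dotProduct, smul_eq_mul]
    ring
  have hkey2 : ∀ ω, h' ω * Gα ω = C₁ * Gw ω := by
    intro ω
    simp only [hh', hGα, hC₁, hGw, hc]
    rw [div_mul_eq_mul_div, div_mul_eq_mul_div, div_eq_div_iff (exp_pos _).ne' (exp_pos _).ne']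
    simp only [← Real.exp_add]
    rw [Real.exp_eq_exp]
    simp only [ha0, hb, sub_dotProduct]
    rw [hφeq]
    ring
  have hgD : ∀ ω, g ω * D ω = h' ω * Fα ω := by
    intro ω
    simp only [hg, hD, hh', hFα, hc]
    rw [div_mul_div_comm, div_mul_eq_mul_div,
      div_eq_div_iff (by positivity) (exp_pos _).ne']
    simp only [← Real.exp_add]
    rw [Real.exp_eq_exp]
    simp only [ha0, hb, sub_dotProduct]
    rw [hφeq, hψeq]
    ring
  -- integrability facts
  have hfD_int : Integrable (fun ω => f ω * D ω) Q :=
    (hint_w.const_mul C₁).congr (Filter.Eventually.of_forall fun ω => (hfD ω).symm)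
  have hf_int : Integrable f (forwardMeasure T Q X x φ ψ Tk uk) := by
    rw [hQ', integrable_withDensity_iff hDmeas.ennreal_ofReal
      (Filter.Eventually.of_forall fun ω => ENNReal.ofReal_lt_top)]
    refine hfD_int.congr (Filter.Eventually.of_forall fun ω => ?_)
    simp only [ENNReal.toReal_ofReal (hD0 ω)]
  have hGw_int : Integrable Gw Q := integrable_condExp.congr hce_w
  have hh'Gα_int : Integrable (fun ω => h' ω * Gα ω) Q :=
    (hGw_int.const_mul C₁).congr (Filter.Eventually.of_forall fun ω => (hkey2 ω).symm)
  have hh'm : Measurable[ℱ s] h' :=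
    (Real.measurable_exp.comp (measurable_const.add
      (measurable_dotProduct_comp hXsm b))).div_const c
  have hh'0 : ∀ ω, 0 ≤ h' ω := fun ω => div_nonneg (exp_pos _).le hcpos.le
  have hFα0 : (0 : Ω → ℝ) ≤ᵐ[Q] Fα := Filter.Eventually.of_forall fun ω => (exp_pos _).le
  obtain ⟨hh'F_int, hset⟩ :=
    integrable_and_setIntegral_mul_condexp (ℱ.le s) hint_α hFα0 hh'm hh'0 hce_α hh'Gα_int
  have hgD_int : Integrable (fun ω => g ω * D ω) Q :=
    hh'F_int.congr (Filter.Eventually.of_forall fun ω => (hgD ω).symm)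
  have hg_int : Integrable g (forwardMeasure T Q X x φ ψ Tk uk) := by
    rw [hQ', integrable_withDensity_iff hDmeas.ennreal_ofReal
      (Filter.Eventually.of_forall fun ω => ENNReal.ofReal_lt_top)]
    refine hgD_int.congr (Filter.Eventually.of_forall fun ω => ?_)
    simp only [ENNReal.toReal_ofReal (hD0 ω)]
  -- apply the characterization of conditional expectation
  refine (ae_eq_condExp_of_forall_setIntegral_eq (ℱ.le s) hf_int
    (fun A hA _ => hg_int.integrableOn) (fun A hA _ => ?_) ?_).symm
  · -- set integrals agree
    have hAm : MeasurableSet A := ℱ.le s A hA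
    have hDnn : Measurable fun ω => (D ω).toNNReal := hDmeas.real_toNNReal
    have hden : (fun ω => ENNReal.ofReal (D ω)) = fun ω => ((D ω).toNNReal : ℝ≥0∞) := rfl
    rw [hQ', hden, setIntegral_withDensity_eq_setIntegral_smul hDnn _ hAm,
      setIntegral_withDensity_eq_setIntegral_smul hDnn _ hAm]
    have hsmul : ∀ (u : Ω → ℝ) ω, (D ω).toNNReal • u ω = u ω * D ω := by
      intro u ω
      simp [NNReal.smul_def, Real.coe_toNNReal _ (hD0 ω), smul_eq_mul, mul_comm]
    calc ∫ ω in A, (D ω).toNNReal • g ω ∂Q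
        = ∫ ω in A, h' ω * Fα ω ∂Q := by
          refine integral_congr_ae (Filter.Eventually.of_forall fun ω => ?_)
          simp only [hsmul g ω, hgD ω]
      _ = ∫ ω in A, h' ω * Gα ω ∂Q := hset A hA
      _ = ∫ ω in A, C₁ * Gw ω ∂Q :=
          integral_congr_ae (Filter.Eventually.of_forall fun ω => hkey2 ω)
      _ = C₁ * ∫ ω in A, Gw ω ∂Q := integral_const_mul _ _
      _ = C₁ * ∫ ω in A, (Q[Fw|ℱ s]) ω ∂Q := by
          rw [integral_congr_ae (ae_restrict_of_ae hce_w.symm)]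
      _ = C₁ * ∫ ω in A, Fw ω ∂Q := by
          rw [setIntegral_condExp (ℱ.le s) hint_w hA]
      _ = ∫ ω in A, C₁ * Fw ω ∂Q := (integral_const_mul _ _).symm
      _ = ∫ ω in A, (D ω).toNNReal • f ω ∂Q := by
          refine integral_congr_ae (Filter.Eventually.of_forall fun ω => ?_)
          simp only [hsmul f ω, hfD ω]
  · -- a.e. strong measurability of g with respect to ℱ s
    refine MeasureTheory.StronglyMeasurable.aestronglyMeasurable ?_
    refine Measurable.stronglyMeasurable ?_
    exact (Real.measurable_exp.comp (measurable_const.add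
        (measurable_dotProduct_comp hXsm _))).div
      (Real.measurable_exp.comp (measurable_const.add (measurable_dotProduct_comp hXsm _)))
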